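/- In the root system of type G₂ with short simple root α₁ and long simple root α₂, if X ⊆ Φ⁺ is a closed subset (closed under addition of roots) that contains α₂, 3α₁+α₂, and 3α₁+2α₂, is stable under the reflection s_{α₁} in the sense that s_{α₁}(X ∩ Φ⁺) ⊆ Φ⁺ implies s_{α₁}(X) = X, and additionally contains α₁+α₂ or 2α₁+α₂, then X = Φ⁺ \ {α₁}. -/
import Mathlib


open scoped RealInnerProductSpace

/-- In the G₂ root system with positive roots
Φ⁺ = {α₁, α₂, α₁+α₂, 2α₁+α₂, 3α₁+α₂, 3α₁+2α₂}, if X ⊆ Φ⁺ is closed, contains α₂, 3α₁+α₂ and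
3α₁+2α₂, is stable under the simple reflection s_{α₁}, and contains α₁+α₂ or 2α₁+α₂,
then X = Φ⁺ \ {α₁}. -/
theorem stmt_13 {V : Type*} [NormedAddCommGroup V] [InnerProductSpace ℝ V]
    (α₁ α₂ : V)
    (h11 : ⟪α₁, α₁⟫ = 2) (h22 : ⟪α₂, α₂⟫ = 6) (h12 : ⟪α₂, α₁⟫ = -3)
    (s : V → V → V)
    (hs : ∀ α v : V, s α v = v - (2 * ⟪v, α⟫ / ⟪α, α⟫) • α)
    (Pos : Set V)
    (hPos : Pos = {α₁, α₂, α₁ + α₂, (2 : ℝ) • α₁ + α₂, (3 : ℝ) • α₁ + α₂,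
      (3 : ℝ) • α₁ + (2 : ℝ) • α₂})
    (Φ : Set V) (hΦ : Φ = Pos ∪ (fun α => -α) '' Pos)
    (X : Set V) (hXPos : X ⊆ Pos)
    (hclosed : ∀ α ∈ X, ∀ β ∈ X, α + β ∈ Φ → α + β ∈ X)
    (h1 : α₂ ∈ X) (h2 : (3 : ℝ) • α₁ + α₂ ∈ X) (h3 : (3 : ℝ) • α₁ + (2 : ℝ) • α₂ ∈ X)
    (hstab : (fun v => s α₁ v) '' X = X)
    (hextra : α₁ + α₂ ∈ X ∨ (2 : ℝ) • α₁ + α₂ ∈ X) :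
    X = Pos \ {α₁} := by
  -- inner product computations
  have iA : ⟪α₁ + α₂, α₁⟫ = (-1 : ℝ) := by
    rw [inner_add_left, h11, h12]; norm_num
  have iB : ⟪(2 : ℝ) • α₁ + α₂, α₁⟫ = (1 : ℝ) := by
    rw [inner_add_left, real_inner_smul_left, h11, h12]; norm_num
  -- reflections
  have sA : s α₁ (α₁ + α₂) = (2 : ℝ) • α₁ + α₂ := by
    rw [hs, iA, h11]; norm_num; module
  have sB : s α₁ ((2 : ℝ) • α₁ + α₂) = α₁ + α₂ := by
    rw [hs, iB, h11]; norm_num; module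
  have sC : s α₁ α₁ = -α₁ := by
    rw [hs, h11]; norm_num; module
  -- both middle roots are in X
  have hAB : α₁ + α₂ ∈ X ∧ (2 : ℝ) • α₁ + α₂ ∈ X := by
    rcases hextra with h | h
    · refine ⟨h, ?_⟩
      have := Set.mem_image_of_mem (fun v => s α₁ v) h
      rw [hstab] at this
      simpa [sA] using this
    · refine ⟨?_, h⟩
      have := Set.mem_image_of_mem (fun v => s α₁ v) h
      rw [hstab] at this
      simpa [sB] using this
  -- α₁ ∉ X
  have hnegPos : -α₁ ∉ Pos := by
    intro hmem
    rw [hPos] at hmem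
    have key : ⟪-α₁, α₁⟫ = (-2 : ℝ) := by
      rw [inner_neg_left, h11]
    rcases hmem with h | h | h | h | h | h <;>
      rw [h] at key <;>
      simp only [inner_add_left, real_inner_smul_left, h11, h12] at key <;>
      try norm_num at key
  have hα₁ : α₁ ∉ X := by
    intro hmem
    have := Set.mem_image_of_mem (fun v => s α₁ v) hmem
    rw [hstab] at this
    simp only [sC] at this
    exact hnegPos (hXPos this)
  ext v
  constructor
  · intro hv
    refine ⟨hXPos hv, ?_⟩
    intro hv1
    rw [Set.mem_singleton_iff] at hv1
    exact hα₁ (hv1 ▸ hv)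
  · rintro ⟨hvPos, hv1⟩
    rw [Set.mem_singleton_iff] at hv1
    rw [hPos] at hvPos
    rcases hvPos with h | h | h | h | h | h
    · exact absurd h hv1
    · exact h ▸ h1
    · exact h ▸ hAB.1
    · exact h ▸ hAB.2
    · exact h ▸ h2
    · exact h ▸ h3
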